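/- Let Σ be a complete simplicial fan in N_ℝ ≅ ℝ^r whose cones are generated by parts of ℤ-bases (unimodular/smooth fan), with primitive ray generators e_1,...,e_s and positive integers a_i assigned to each ray. Let ω : ℝ^r → ℝ be the Σ-piecewise linear function with ω(e_i) = -a_i. Then ∑_{n ∈ N} t^{-ω(n)} = ∑_{σ ∈ Σ} ∏_{e_i ∈ σ(1)} t^{a_i}/(1 - t^{a_i}) = ∑_{σ ∈ Σ} (-1)^{dim σ} ∏_{e_i ∈ σ(1)} 1/(1 - t^{-a_i}), where the first sum decomposes N into the disjoint union of the relative interiors of the cones of Σ. -/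

import Mathlib

open PowerSeries Finset

lemma factor_eq (a : ℕ) (ha : 0 < a) :
    (X : PowerSeries ℚ) ^ a * (1 - X ^ a)⁻¹ =
      PowerSeries.mk (fun n => if a ∣ n ∧ n ≠ 0 then (1 : ℚ) else 0) := by
  symm
  rw [PowerSeries.eq_mul_inv_iff_mul_eq]
  · ext n
    rw [mul_sub, mul_one, map_sub, PowerSeries.coeff_mul_X_pow', coeff_X_pow,
      PowerSeries.coeff_mk]
    by_cases h1 : n = a
    · subst h1
      simp [ha.ne', Nat.dvd_refl, PowerSeries.coeff_mk]
    · simp only [h1, if_false]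
      by_cases h2 : a ∣ n
      · by_cases h3 : n = 0
        · subst h3; simp [Nat.not_le.mpr ha]
        · have hle : a ≤ n := Nat.le_of_dvd (Nat.pos_of_ne_zero h3) h2
          have hsub : a ∣ n - a := (Nat.dvd_sub h2 dvd_rfl)
          have hne : n - a ≠ 0 := by
            intro h
            exact h1 (le_antisymm (Nat.le_of_sub_eq_zero h) hle)
          simp [h2, h3, hle, PowerSeries.coeff_mk, hsub, hne]
      · have : ¬ (a ∣ n - a) ∨ ¬ a ≤ n := by
          by_cases hle : a ≤ n
          · left; intro hd
            exact h2 (by simpa [Nat.sub_add_cancel hle] using Nat.dvd_add hd (dvd_refl a))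
          · right; exact hle
        rcases this with h | h <;> simp [h2, PowerSeries.coeff_mk, h]
  · simp [ha.ne', constantCoeff_X]

lemma ratfunc_factor (a : ℕ) (ha : 0 < a) :
    ((RatFunc.X : RatFunc ℚ) ^ a / (1 - RatFunc.X ^ a))
      = -(1 - (RatFunc.X⁻¹ : RatFunc ℚ) ^ a)⁻¹ := by
  have hX : (RatFunc.X : RatFunc ℚ) ≠ 0 := RatFunc.X_ne_zero
  have hy0 : (RatFunc.X : RatFunc ℚ) ^ a ≠ 0 := pow_ne_zero _ hX
  have hy1 : (RatFunc.X : RatFunc ℚ) ^ a ≠ 1 := by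
    intro h
    have := RatFunc.algebraMap_injective ℚ
      (by simpa [RatFunc.algebraMap_X, map_pow] using h :
        algebraMap (Polynomial ℚ) (RatFunc ℚ) (Polynomial.X ^ a)
          = algebraMap (Polynomial ℚ) (RatFunc ℚ) 1)
    have hdeg := congrArg Polynomial.natDegree this
    simp [Polynomial.natDegree_X_pow] at hdeg
    exact ha.ne' hdeg
  have h1y : 1 - (RatFunc.X : RatFunc ℚ) ^ a ≠ 0 := sub_ne_zero.mpr (Ne.symm hy1)
  rw [inv_pow]
  have h3 : 1 - ((RatFunc.X : RatFunc ℚ) ^ a)⁻¹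
      = (1 - (RatFunc.X : RatFunc ℚ) ^ a) * (-((RatFunc.X : RatFunc ℚ) ^ a)⁻¹) := by
    field_simp
    ring
  rw [h3, mul_inv, inv_neg, inv_inv, div_eq_mul_inv]
  ring

/-- Let `Σ` be a complete unimodular fan in `ℝ^r` with primitive ray
generators `e_1, …, e_s` and positive integers `a_i` attached to the rays; cones of `Σ`
are recorded by their sets of rays (`C`, closed under faces).  Completeness and
unimodularity are encoded by: every `n ∈ N = ℤ^r` lies in the relative interior of a
unique cone `σ ∈ Σ` and there has a unique expression `n = ∑_{i ∈ σ(1)} kᵢ eᵢ` with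
`kᵢ > 0`.  Let `ω` be the `Σ`-piecewise linear function with `ω(eᵢ) = -aᵢ`.  Then
`∑_{n ∈ N} t^{-ω(n)} = ∑_{σ ∈ Σ} ∏_{eᵢ ∈ σ(1)} t^{aᵢ}/(1 - t^{aᵢ})`
(as power series), and
`∑_{σ ∈ Σ} ∏ t^{aᵢ}/(1-t^{aᵢ}) = ∑_{σ ∈ Σ} (-1)^{dim σ} ∏ 1/(1 - t^{-aᵢ})`
(as rational functions). -/
theorem complete_fan_lattice_generating_series (r s : ℕ)
    (e : Fin s → (Fin r → ℤ)) (a : Fin s → ℕ) (ha : ∀ i, 0 < a i)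
    (C : Finset (Finset (Fin s)))
    (hfaces : ∀ σ ∈ C, ∀ τ ⊆ σ, τ ∈ C)
    (hpart : ∀ n : Fin r → ℤ, ∃! p : Finset (Fin s) × (Fin s → ℕ),
        p.1 ∈ C ∧ (∀ i, i ∈ p.1 ↔ 0 < p.2 i) ∧ n = ∑ i ∈ p.1, (p.2 i : ℤ) • e i)
    (ω : (Fin r → ℤ) → ℤ)
    (hω : ∀ σ ∈ C, ∀ k : Fin s → ℕ,
        ω (∑ i ∈ σ, (k i : ℤ) • e i) = -∑ i ∈ σ, (k i : ℤ) * a i) :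
    (PowerSeries.mk (fun m => (Nat.card {n : Fin r → ℤ // ω n = -(m : ℤ)} : ℚ)) =
        ∑ σ ∈ C, ∏ i ∈ σ, ((X : PowerSeries ℚ) ^ (a i) * (1 - X ^ (a i))⁻¹)) ∧
    (∑ σ ∈ C, ∏ i ∈ σ, ((RatFunc.X : RatFunc ℚ) ^ (a i) / (1 - RatFunc.X ^ (a i)))
        = ∑ σ ∈ C, (-1 : RatFunc ℚ) ^ σ.card *
            ∏ i ∈ σ, (1 - (RatFunc.X⁻¹ : RatFunc ℚ) ^ (a i))⁻¹) := by
  constructor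
  · -- power series identity
    ext m
    rw [PowerSeries.coeff_mk, map_sum]
    -- the finsets counting lattice points in each cone
    set S : Finset (Fin s) → Finset (Fin s →₀ ℕ) := fun σ =>
      (σ.finsuppAntidiag m).filter (fun l => ∀ i ∈ σ, a i ∣ l i ∧ l i ≠ 0) with hS
    have hfac : ∀ σ ∈ C,
        (PowerSeries.coeff m) (∏ i ∈ σ, (X : PowerSeries ℚ) ^ (a i) * (1 - X ^ (a i))⁻¹)
          = ((S σ).card : ℚ) := by
      intro σ hσ
      rw [Finset.prod_congr rfl (fun i _ => factor_eq (a i) (ha i)),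
        PowerSeries.coeff_prod]
      have : ∀ l ∈ σ.finsuppAntidiag m,
          (∏ i ∈ σ, (PowerSeries.coeff (l i))
              (PowerSeries.mk (fun n => if a i ∣ n ∧ n ≠ 0 then (1 : ℚ) else 0)))
            = if (∀ i ∈ σ, a i ∣ l i ∧ l i ≠ 0) then (1 : ℚ) else 0 := by
        intro l _
        simp only [PowerSeries.coeff_mk]
        rw [Finset.prod_boole]
        by_cases h : ∀ i ∈ σ, a i ∣ l i ∧ l i ≠ 0 <;> simp [h]
      rw [Finset.sum_congr rfl this]
      rw [hS]
      simp only [Finset.card_filter]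
      push_cast
      rfl
    rw [Finset.sum_congr rfl hfac]
    -- now count lattice points
    have key : Nat.card {n : Fin r → ℤ // ω n = -(m : ℤ)} = (C.sigma (fun σ => S σ)).card := by
      rw [← Nat.card_eq_finsetCard]
      -- properties of members of the sigma finset
      have hmem : ∀ x : (Σ _ : Finset (Fin s), (Fin s →₀ ℕ)), x ∈ C.sigma (fun σ => S σ) →
          x.1 ∈ C ∧ (∑ i ∈ x.1, x.2 i) = m ∧ x.2.support ⊆ x.1 ∧
            ∀ i ∈ x.1, a i ∣ x.2 i ∧ x.2 i ≠ 0 := by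
        intro x hx
        rw [Finset.mem_sigma] at hx
        obtain ⟨hx1, hx2⟩ := hx
        rw [hS, Finset.mem_filter, Finset.mem_finsuppAntidiag] at hx2
        exact ⟨hx1, hx2.1.1, hx2.1.2, hx2.2⟩
      -- the forward map value
      have hval : ∀ x : (Σ _ : Finset (Fin s), (Fin s →₀ ℕ)), x ∈ C.sigma (fun σ => S σ) →
          ω (∑ i ∈ x.1, ((x.2 i / a i : ℕ) : ℤ) • e i) = -(m : ℤ) := by
        intro x hx
        obtain ⟨hC1, hsum, hsupp, hdiv⟩ := hmem x hx
        rw [hω x.1 hC1 (fun i => x.2 i / a i)]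
        have : ∀ i ∈ x.1, ((x.2 i / a i : ℕ) : ℤ) * (a i : ℤ) = (x.2 i : ℤ) := by
          intro i hi
          rw [← Nat.cast_mul, Nat.div_mul_cancel (hdiv i hi).1]
        rw [Finset.sum_congr rfl this, ← Nat.cast_sum, hsum]
      -- the canonical hpart-witness attached to x
      have hwit : ∀ x : (Σ _ : Finset (Fin s), (Fin s →₀ ℕ)), x ∈ C.sigma (fun σ => S σ) →
          (x.1 ∈ C ∧ (∀ i, i ∈ x.1 ↔ 0 < (if i ∈ x.1 then x.2 i / a i else 0)) ∧
            (∑ i ∈ x.1, ((x.2 i / a i : ℕ) : ℤ) • e i) =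
              ∑ i ∈ x.1, ((if i ∈ x.1 then x.2 i / a i else 0 : ℕ) : ℤ) • e i) := by
        intro x hx
        obtain ⟨hC1, hsum, hsupp, hdiv⟩ := hmem x hx
        refine ⟨hC1, ?_, ?_⟩
        · intro i
          constructor
          · intro hi
            simp only [hi, if_true]
            exact Nat.div_pos (Nat.le_of_dvd (Nat.pos_of_ne_zero (hdiv i hi).2) (hdiv i hi).1)
              (ha i)
          · intro hpos
            by_contra hni
            simp [hni] at hpos
        · refine Finset.sum_congr rfl fun i hi => ?_
          simp [hi]
      refine Nat.card_congr (Equiv.ofBijective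
        (fun x : {x // x ∈ C.sigma (fun σ => S σ)} =>
          (⟨∑ i ∈ x.1.1, ((x.1.2 i / a i : ℕ) : ℤ) • e i, hval x.1 x.2⟩ :
            {n : Fin r → ℤ // ω n = -(m : ℤ)})) ⟨?_, ?_⟩).symm
      · -- injectivity
        rintro ⟨⟨σ₁, l₁⟩, h₁⟩ ⟨⟨σ₂, l₂⟩, h₂⟩ heq
        have hn := congrArg Subtype.val heq
        simp only at hn
        obtain ⟨hC₁, hiff₁, hval₁⟩ := hwit ⟨σ₁, l₁⟩ h₁
        obtain ⟨hC₂, hiff₂, hval₂⟩ := hwit ⟨σ₂, l₂⟩ h₂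
        have hu := (hpart (∑ i ∈ σ₁, ((l₁ i / a i : ℕ) : ℤ) • e i)).unique
          (y₁ := (σ₁, fun i => if i ∈ σ₁ then l₁ i / a i else 0))
          (y₂ := (σ₂, fun i => if i ∈ σ₂ then l₂ i / a i else 0))
          ⟨hC₁, hiff₁, hval₁⟩ (by rw [hn]; exact ⟨hC₂, hiff₂, hval₂⟩)
        have hσ : σ₁ = σ₂ := congrArg Prod.fst hu
        subst hσ
        have hk : (fun i => if i ∈ σ₁ then l₁ i / a i else 0)
            = (fun i => if i ∈ σ₁ then l₂ i / a i else 0) := congrArg Prod.snd hu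
        obtain ⟨-, -, hsupp₁, hdiv₁⟩ := hmem ⟨σ₁, l₁⟩ h₁
        obtain ⟨-, -, hsupp₂, hdiv₂⟩ := hmem ⟨σ₁, l₂⟩ h₂
        have hl : l₁ = l₂ := by
          ext i
          by_cases hi : i ∈ σ₁
          · have := congrFun hk i
            simp only [hi, if_true] at this
            have e₁ : a i * (l₁ i / a i) = l₁ i := Nat.mul_div_cancel' (hdiv₁ i hi).1
            have e₂ : a i * (l₂ i / a i) = l₂ i := Nat.mul_div_cancel' (hdiv₂ i hi).1
            rw [← e₁, ← e₂, this]
          · have z₁ : l₁ i = 0 := Finsupp.notMem_support_iff.mp (fun h => hi (hsupp₁ h))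
            have z₂ : l₂ i = 0 := Finsupp.notMem_support_iff.mp (fun h => hi (hsupp₂ h))
            rw [z₁, z₂]
        subst hl
        rfl
      · -- surjectivity
        rintro ⟨n, hn⟩
        obtain ⟨⟨σ, k⟩, ⟨hσC, hiff, hsum⟩, -⟩ := hpart n
        have hωn : ω n = -∑ i ∈ σ, (k i : ℤ) * a i := by
          rw [hsum]; exact hω σ hσC k
        have hm : (∑ i ∈ σ, k i * a i : ℕ) = m := by
          have : ((∑ i ∈ σ, k i * a i : ℕ) : ℤ) = (m : ℤ) := by
            push_cast
            have := hn
            rw [hωn] at this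
            linarith [this]
          exact_mod_cast this
        set l : Fin s →₀ ℕ :=
          Finsupp.equivFunOnFinite.symm (fun i => if i ∈ σ then a i * k i else 0) with hl
        have hlapp : ∀ i, l i = if i ∈ σ then a i * k i else 0 := by
          intro i; rw [hl]; rfl
        have hxmem : (⟨σ, l⟩ : Σ _ : Finset (Fin s), (Fin s →₀ ℕ)) ∈
            C.sigma (fun σ => S σ) := by
          rw [Finset.mem_sigma]
          refine ⟨hσC, ?_⟩
          rw [hS, Finset.mem_filter, Finset.mem_finsuppAntidiag]
          refine ⟨⟨?_, ?_⟩, ?_⟩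
          · rw [← hm]
            refine Finset.sum_congr rfl fun i hi => ?_
            rw [hlapp i]
            simp [hi, Nat.mul_comm]
          · intro i hi
            rw [Finsupp.mem_support_iff, hlapp i] at hi
            by_contra hni
            simp [hni] at hi
          · intro i hi
            rw [hlapp i]
            simp only [hi, if_true]
            exact ⟨Dvd.intro _ rfl, Nat.mul_ne_zero (ha i).ne' ((hiff i).mp hi).ne'⟩
        refine ⟨⟨⟨σ, l⟩, hxmem⟩, ?_⟩
        apply Subtype.ext
        simp only
        rw [hsum]
        refine Finset.sum_congr rfl fun i hi => ?_
        rw [hlapp i]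
        simp [hi, Nat.mul_div_cancel_left _ (ha i)]
    rw [key, Finset.card_sigma]
    push_cast
    rfl
  · -- rational function identity
    refine Finset.sum_congr rfl fun σ _ => ?_
    rw [Finset.prod_congr rfl (fun i _ => ratfunc_factor (a i) (ha i))]
    have : ∀ i ∈ σ, -(1 - (RatFunc.X⁻¹ : RatFunc ℚ) ^ a i)⁻¹
        = (-1) * (1 - (RatFunc.X⁻¹ : RatFunc ℚ) ^ a i)⁻¹ := fun i _ => by ring
    rw [Finset.prod_congr rfl this, Finset.prod_mul_distrib, Finset.prod_const]
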